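/- arXiv:2403.03237 — 4 statements merged into one kernel-verified Lean document; each statement's English description precedes it below -/
import Mathlib

section
/- For every integer k ≥ 1, every real θ, and every index j ∈ {1,…,k}, the operator H^{⊗k} · exp(iθ h_k) · H^{⊗k} commutes with the bit-flip on the j-th qubit: (H^{⊗k} exp(iθ h_k) H^{⊗k}) · X^{(j)} = X^{(j)} · (H^{⊗k} exp(iθ h_k) H^{⊗k}). -/
open Matrix Finset

/-- Tensor (Kronecker) product of a family of 2×2 complex matrices, one per qubit. -/
noncomputable def tens {n : ℕ} (M : Fin n → Matrix (Fin 2) (Fin 2) ℂ) :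
    Matrix (Fin n → Fin 2) (Fin n → Fin 2) ℂ :=
  Matrix.of fun x y => ∏ j, M j (x j) (y j)

/-- `n`-fold Kronecker power of a 2×2 complex matrix. -/
noncomputable def kpow (n : ℕ) (A : Matrix (Fin 2) (Fin 2) ℂ) :
    Matrix (Fin n → Fin 2) (Fin n → Fin 2) ℂ := tens (fun _ => A)

/-- `σ_{z+} = [[1,0],[0,0]]`, the projection onto `|0⟩`. -/
noncomputable def sigmaZP : Matrix (Fin 2) (Fin 2) ℂ := !![1, 0; 0, 0]

/-- The Hadamard gate. -/
noncomputable def hadamard : Matrix (Fin 2) (Fin 2) ℂ :=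
  (Real.sqrt 2 : ℂ)⁻¹ • !![1, 1; 1, -1]

/-- The bit-flip gate `X`. -/
noncomputable def gateX : Matrix (Fin 2) (Fin 2) ℂ := !![0, 1; 1, 0]

/-- The operator `B^{(j)}`: `B` on qubit `j`, identity elsewhere. -/
noncomputable def localAt {n : ℕ} (B : Matrix (Fin 2) (Fin 2) ℂ) (j : Fin n) :
    Matrix (Fin n → Fin 2) (Fin n → Fin 2) ℂ :=
  tens (fun l => if l = j then B else 1)

lemma tens_mul {n : ℕ} (M N : Fin n → Matrix (Fin 2) (Fin 2) ℂ) :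
    tens M * tens N = tens (fun j => M j * N j) := by
  ext x z
  simp only [tens, Matrix.mul_apply, Matrix.of_apply]
  rw [Finset.prod_univ_sum, Fintype.piFinset_univ]
  exact Finset.sum_congr rfl fun y _ => (Finset.prod_mul_distrib).symm

lemma tens_one {n : ℕ} : tens (fun _ : Fin n => (1 : Matrix (Fin 2) (Fin 2) ℂ)) = 1 := by
  ext x y
  by_cases h : x = y
  · subst h; simp [tens, Matrix.one_apply]
  · obtain ⟨l, hl⟩ := Function.ne_iff.mp h
    simp only [tens, Matrix.of_apply, Matrix.one_apply]
    rw [Finset.prod_eq_zero (Finset.mem_univ l) (by simp [hl]), if_neg h]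

lemma sqrt2_sq : ((Real.sqrt 2 : ℝ) : ℂ) * ((Real.sqrt 2 : ℝ) : ℂ) = 2 := by
  norm_cast
  rw [Real.mul_self_sqrt (by norm_num)]

lemma had_mul_had : hadamard * hadamard = 1 := by
  have h := sqrt2_sq
  ext i j
  fin_cases i <;> fin_cases j <;>
    simp [_root_.hadamard, Matrix.mul_apply, Fin.sum_univ_two, Matrix.one_apply] <;>
    field_simp <;> linear_combination -h

lemma hxh_comm_sigma :
    (hadamard * (gateX * hadamard)) * sigmaZP = sigmaZP * (hadamard * (gateX * hadamard)) := by
  ext i j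
  fin_cases i <;> fin_cases j <;>
    simp [_root_.hadamard, gateX, sigmaZP, Matrix.mul_apply, Fin.sum_univ_two]

lemma kpow_had_sq (k : ℕ) : kpow k hadamard * kpow k hadamard = 1 := by
  rw [kpow, tens_mul]
  simp only [had_mul_had]
  exact tens_one

/-- `H^{⊗k} exp(iθ h_k) H^{⊗k}` commutes with the bit-flip on any qubit `j`, where
`h_k = σ_{z+}^{⊗k}`. -/
theorem hadamard_exp_hk_hadamard_comm_X (k : ℕ) (hk : 1 ≤ k) (θ : ℝ) (j : Fin k) :
    (kpow k hadamard * NormedSpace.exp ((Complex.I * (θ : ℂ)) • kpow k sigmaZP) *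
        kpow k hadamard) * localAt gateX j
      = localAt gateX j *
        (kpow k hadamard * NormedSpace.exp ((Complex.I * (θ : ℂ)) • kpow k sigmaZP) *
          kpow k hadamard) := by
  set K := kpow k hadamard with hKdef
  set A := localAt gateX j with hAdef
  set E := NormedSpace.exp ((Complex.I * (θ : ℂ)) • kpow k sigmaZP) with hEdef
  have hK : K * K = 1 := kpow_had_sq k
  -- K * A * K commutes with kpow k sigmaZP
  have hLh : (K * A * K) * kpow k sigmaZP = kpow k sigmaZP * (K * A * K) := by
    have hL : K * A * K = tens (fun l => hadamard * ((if l = j then gateX else 1) * hadamard)) := by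
      simp only [hKdef, hAdef, localAt, kpow, tens_mul, mul_assoc]
    rw [hL, kpow, tens_mul, tens_mul]
    refine congrArg tens (funext fun l => ?_)
    by_cases h : l = j
    · simpa [h] using hxh_comm_sigma
    · rw [if_neg h, one_mul, had_mul_had, one_mul, mul_one]
  -- hence it commutes with E
  have hLE : (K * A * K) * E = E * (K * A * K) := by
    have hc : Commute (K * A * K) ((Complex.I * (θ : ℂ)) • kpow k sigmaZP) :=
      Commute.smul_right hLh _
    exact hc.exp_right
  have e1 : K * E * K * A = K * (E * (K * A * K)) * K := by
    calc K * E * K * A = K * E * K * A * (K * K) := by rw [hK, mul_one]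
      _ = K * (E * (K * A * K)) * K := by simp only [mul_assoc]
  have e2 : A * (K * E * K) = K * ((K * A * K) * E) * K := by
    calc A * (K * E * K) = (K * K) * (A * (K * E * K)) := by rw [hK, one_mul]
      _ = K * ((K * A * K) * E) * K := by simp only [mul_assoc]
  rw [e1, e2, hLE]
end

section
/- Fix integers n ≥ k ≥ 1, a target t ∈ {0,1}^n, a real θ, and an integer p ≥ 0. Let X_C = ⊗_{j=1}^n X^{t_j} (where X^0 = I₂, X^1 = X). Then the k-local quantum search circuit with target t reduces to the circuit with target 0^n: (H^{⊗n} exp(−iθ H_{n,k,0}) H^{⊗n} · exp(−iθ H_{n,k,t}))^p |+⟩^{⊗n} = X_C · (H^{⊗n} exp(−iθ H_{n,k,0}) H^{⊗n} · exp(−iθ H_{n,k,0}))^p |+⟩^{⊗n}, where |+⟩^{⊗n} = 2^{−n/2} Σ_{x ∈ {0,1}^n} |x⟩. -/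
open Matrix Finset

/-- Number of positions where `x` agrees with `t`. -/
def agree {n : ℕ} (x t : Fin n → Fin 2) : ℕ :=
  (Finset.univ.filter (fun j => x j = t j)).card

/-- The `k`-local search Hamiltonian `H_{n,k,t}`: diagonal with entry `C(d,k)/C(n,k)` at the
basis state `x`, where `d` is the number of positions where `x` agrees with `t`. -/
noncomputable def Hsearch (n k : ℕ) (t : Fin n → Fin 2) :
    Matrix (Fin n → Fin 2) (Fin n → Fin 2) ℂ :=
  Matrix.diagonal (fun x => ((agree x t).choose k : ℂ) / (n.choose k : ℂ))

/-- `|+⟩^{⊗n} = 2^{-n/2} ∑_x |x⟩`. -/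
noncomputable def plusVec (n : ℕ) : (Fin n → Fin 2) → ℂ :=
  fun _ => (Real.sqrt 2 : ℂ)⁻¹ ^ n

section Helpers

variable {n : ℕ}

/-- Flip `x` at the positions where `t` is 1. -/
def flipT (t x : Fin n → Fin 2) : Fin n → Fin 2 := fun j => x j + t j

lemma fin2_add_add (a b : Fin 2) : a + b + b = a := by fin_cases a <;> fin_cases b <;> decide

lemma fin2_add_eq_zero (a b : Fin 2) : (a + b = 0) ↔ (a = b) := by
  fin_cases a <;> fin_cases b <;> decide

lemma flipT_flipT (t x : Fin n → Fin 2) : flipT t (flipT t x) = x := by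
  funext j; exact fin2_add_add _ _

lemma factor_apply (c a b : Fin 2) :
    (if c = 0 then (1 : Matrix (Fin 2) (Fin 2) ℂ) else gateX) a b
      = if b = a + c then 1 else 0 := by
  fin_cases a <;> fin_cases b <;> fin_cases c <;>
    simp [gateX, Matrix.one_apply]

lemma Xc_apply (t x y : Fin n → Fin 2) :
    tens (fun j => if t j = 0 then (1 : Matrix (Fin 2) (Fin 2) ℂ) else gateX) x y
      = if y = flipT t x then 1 else 0 := by
  unfold tens
  simp only [Matrix.of_apply, factor_apply]
  by_cases h : y = flipT t x
  · rw [if_pos h]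
    refine Finset.prod_eq_one fun j _ => ?_
    rw [if_pos (by rw [h]; rfl)]
  · rw [if_neg h]
    obtain ⟨j, hj⟩ : ∃ j, y j ≠ x j + t j := by
      by_contra hc; push_neg at hc; exact h (funext hc)
    exact Finset.prod_eq_zero (Finset.mem_univ j) (if_neg hj)

lemma Xc_mul (t : Fin n → Fin 2) (M : Matrix (Fin n → Fin 2) (Fin n → Fin 2) ℂ) :
    tens (fun j => if t j = 0 then (1 : Matrix (Fin 2) (Fin 2) ℂ) else gateX) * M
      = Matrix.of fun x y => M (flipT t x) y := by
  ext x y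
  rw [Matrix.mul_apply]
  simp only [Xc_apply, ite_mul, one_mul, zero_mul, Matrix.of_apply]
  rw [Finset.sum_ite_eq' Finset.univ (flipT t x) (fun z => M z y)]
  simp

lemma mul_Xc (t : Fin n → Fin 2) (M : Matrix (Fin n → Fin 2) (Fin n → Fin 2) ℂ) :
    M * tens (fun j => if t j = 0 then (1 : Matrix (Fin 2) (Fin 2) ℂ) else gateX)
      = Matrix.of fun x y => M x (flipT t y) := by
  ext x y
  rw [Matrix.mul_apply]
  have hcond : ∀ z : Fin n → Fin 2, (y = flipT t z) ↔ (z = flipT t y) := by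
    intro z
    constructor
    · intro h; rw [h, flipT_flipT]
    · intro h; rw [h, flipT_flipT]
  simp only [Xc_apply, mul_ite, mul_one, mul_zero]
  rw [Finset.sum_congr rfl (fun z _ => by rw [if_congr (hcond z) rfl rfl]),
    Finset.sum_ite_eq' Finset.univ (flipT t y) (fun z => M x z)]
  simp

lemma Xc_mul_Xc (t : Fin n → Fin 2) :
    tens (fun j => if t j = 0 then (1 : Matrix (Fin 2) (Fin 2) ℂ) else gateX) *
      tens (fun j => if t j = 0 then (1 : Matrix (Fin 2) (Fin 2) ℂ) else gateX) = 1 := by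
  rw [Xc_mul]
  ext x y
  rw [Matrix.of_apply, Xc_apply, flipT_flipT, Matrix.one_apply]
  simp [eq_comm]

lemma exp_Hsearch (m k : ℕ) (t : Fin m → Fin 2) (θ : ℝ) :
    NormedSpace.exp ((-(Complex.I * (θ : ℂ))) • Hsearch m k t)
      = Matrix.diagonal (fun x => NormedSpace.exp
          ((-(Complex.I * (θ : ℂ))) * (((agree x t).choose k : ℂ) / (m.choose k : ℂ)))) := by
  rw [Hsearch, ← Matrix.diagonal_smul, Matrix.exp_diagonal, Pi.exp_def]
  simp only [Pi.smul_apply, smul_eq_mul]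

lemma agree_flipT (t x : Fin n → Fin 2) :
    agree (flipT t x) (fun _ => 0) = agree x t := by
  unfold agree
  congr 1
  apply Finset.filter_congr
  intro j _
  simp [flipT, fin2_add_eq_zero]

lemma hadamard_conj (c a b d : Fin 2) :
    _root_.hadamard (a + c) b * _root_.hadamard b (d + c)
      = _root_.hadamard a b * _root_.hadamard b d := by
  fin_cases a <;> fin_cases b <;> fin_cases c <;> fin_cases d <;>
    simp [_root_.hadamard, Matrix.smul_apply] <;> ring

lemma kpow_hadamard_conj (t x y z : Fin n → Fin 2) :
    kpow n hadamard (flipT t x) z * kpow n hadamard z (flipT t y)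
      = kpow n hadamard x z * kpow n hadamard z y := by
  unfold kpow tens flipT
  simp only [Matrix.of_apply]
  rw [← Finset.prod_mul_distrib, ← Finset.prod_mul_distrib]
  exact Finset.prod_congr rfl fun j _ => hadamard_conj _ _ _ _

end Helpers

/-- The `k`-local quantum search circuit with an arbitrary target `t` reduces to the circuit
with target `0^n`, up to the final bit-flip layer `X_C = ⊗_j X^{t_j}`. -/
theorem k_local_search_target_reduction (n k : ℕ) (hk : 1 ≤ k) (hkn : k ≤ n)
    (t : Fin n → Fin 2) (θ : ℝ) (p : ℕ) :
    ((kpow n hadamard *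
        NormedSpace.exp ((-(Complex.I * (θ : ℂ))) • Hsearch n k (fun _ => 0)) *
        kpow n hadamard *
        NormedSpace.exp ((-(Complex.I * (θ : ℂ))) • Hsearch n k t)) ^ p).mulVec (plusVec n)
      = (tens (fun j => if t j = 0 then (1 : Matrix (Fin 2) (Fin 2) ℂ) else gateX)).mulVec
          (((kpow n hadamard *
              NormedSpace.exp ((-(Complex.I * (θ : ℂ))) • Hsearch n k (fun _ => 0)) *
              kpow n hadamard *
              NormedSpace.exp ((-(Complex.I * (θ : ℂ))) • Hsearch n k (fun _ => 0))) ^ p).mulVec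
            (plusVec n)) := by
  set Xc := tens (fun j => if t j = 0 then (1 : Matrix (Fin 2) (Fin 2) ℂ) else gateX) with hXcdef
  set kH := kpow n hadamard with hkH
  set E0 := NormedSpace.exp ((-(Complex.I * (θ : ℂ))) • Hsearch n k (fun _ => 0)) with hE0
  set Et := NormedSpace.exp ((-(Complex.I * (θ : ℂ))) • Hsearch n k t) with hEtdef
  set g0 : (Fin n → Fin 2) → ℂ := fun x => NormedSpace.exp
      ((-(Complex.I * (θ : ℂ))) * (((agree x (fun _ => 0)).choose k : ℂ) / (n.choose k : ℂ)))
    with hg0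
  have hE0d : E0 = Matrix.diagonal g0 := exp_Hsearch n k (fun _ => 0) θ
  have hXX : Xc * Xc = 1 := Xc_mul_Xc t
  -- conjugating the target-0 evolution by `Xc` gives the target-t evolution
  have hconjE : Xc * E0 * Xc = Et := by
    rw [hE0, hEtdef, exp_Hsearch, exp_Hsearch, Xc_mul, mul_Xc]
    ext x y
    simp only [Matrix.of_apply]
    by_cases h : x = y
    · subst h
      rw [Matrix.diagonal_apply_eq, Matrix.diagonal_apply_eq, agree_flipT]
    · have h2 : flipT t x ≠ flipT t y := by
        intro he
        exact h (by rw [← flipT_flipT t x, he, flipT_flipT])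
      rw [Matrix.diagonal_apply_ne _ h2, Matrix.diagonal_apply_ne _ h]
  set B := kH * E0 * kH with hB
  have hentry : ∀ a b, (kH * Matrix.diagonal g0 * kH) a b
      = ∑ z, kH a z * g0 z * kH z b := by
    intro a b
    rw [Matrix.mul_apply]
    exact Finset.sum_congr rfl fun z _ => by rw [Matrix.mul_diagonal]
  -- `Xc` commutes with `B = H^{⊗n} exp(-iθ H₀) H^{⊗n}`
  have hBconj : Xc * B * Xc = B := by
    rw [hB, hE0d, Xc_mul, mul_Xc]
    ext x y
    simp only [Matrix.of_apply]
    rw [hentry, hentry]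
    refine Finset.sum_congr rfl fun z _ => ?_
    rw [mul_right_comm, hkH, kpow_hadamard_conj, mul_right_comm]
  have hcomm : Xc * B = B * Xc := by
    have h := congrArg (· * Xc) hBconj
    simpa [mul_assoc, hXX] using h
  have hMt : B * Et = Xc * (B * E0) * Xc := by
    rw [← hconjE, ← mul_assoc, ← mul_assoc, ← hcomm, mul_assoc Xc B E0]
  have hpow : (B * Et) ^ p = Xc * (B * E0) ^ p * Xc := by
    rw [hMt]
    exact Units.conj_pow ⟨Xc, Xc, hXX, hXX⟩ (B * E0) p
  have hplus : Xc.mulVec (plusVec n) = plusVec n := by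
    funext x
    simp only [Matrix.mulVec, dotProduct, hXcdef, Xc_apply, plusVec,
      ite_mul, one_mul, zero_mul]
    rw [Finset.sum_ite_eq' Finset.univ (flipT t x)]
    simp
  rw [hpow, ← Matrix.mulVec_mulVec, ← Matrix.mulVec_mulVec, hplus]
end

section
/- Fix integers 1 ≤ k ≤ n and assignments t, x ∈ {0,1}^n, and let d be the number of positions j with x_j = t_j. Then the number of k-clauses over n Boolean variables that are satisfied by t but not by x equals C(n,k) − C(d,k), and consequently the number of k-clauses satisfied by both t and x equals (2^k − 2)·C(n,k) + C(d,k), where C(·,·) is the binomial coefficient (C(d,k) = 0 for d < k). -/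
open Finset

/-- A `k`-clause over `n` Boolean variables, encoded as a partial assignment
`c : Fin n → Option (Fin 2)` whose support (the clause's variable set `S`) has size `k`;
`c j = some a` means `j ∈ S` with `ε(j) = a`. -/
def KClause (n k : ℕ) : Type :=
  {c : Fin n → Option (Fin 2) // (Finset.univ.filter (fun j => (c j).isSome)).card = k}

instance (n k : ℕ) : Fintype (KClause n k) := by
  unfold KClause; infer_instance

instance (n k : ℕ) : DecidableEq (KClause n k) := by
  unfold KClause; infer_instance

/-- The clause `c` is satisfied by the assignment `x` iff some literal of `c` is not
violated by `x`, i.e. `∃ j ∈ S` with `x j ≠ ε(j)`. -/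
def ClauseSat {n k : ℕ} (x : Fin n → Fin 2) (c : KClause n k) : Prop :=
  ∃ j a, c.1 j = some a ∧ x j ≠ a

instance {n k : ℕ} (x : Fin n → Fin 2) : DecidablePred (ClauseSat (k := k) x) := by
  intro c; unfold ClauseSat; infer_instance

def supp {n k : ℕ} (c : KClause n k) : Finset (Fin n) :=
  Finset.univ.filter (fun j => (c.1 j).isSome)

lemma card_supp {n k : ℕ} (c : KClause n k) : (supp c).card = k := c.2

lemma notSat_iff {n k : ℕ} (x : Fin n → Fin 2) (c : KClause n k) :
    ¬ ClauseSat x c ↔ ∀ j a, c.1 j = some a → x j = a := by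
  simp [ClauseSat]

lemma card_notSat_subset {n k : ℕ} (x : Fin n → Fin 2) (T : Finset (Fin n)) :
    (Finset.univ.filter (fun c : KClause n k => ¬ ClauseSat x c ∧ supp c ⊆ T)).card
      = T.card.choose k := by
  rw [← Finset.card_powersetCard k T]
  refine Finset.card_bij' (fun c _ => supp c)
    (fun S hS => ⟨fun j => if j ∈ S then some (x j) else none, ?_⟩) ?_ ?_ ?_ ?_
  · rw [Finset.mem_powersetCard] at hS
    have : (Finset.univ.filter (fun j => (if j ∈ S then some (x j) else none).isSome))
        = S := by
      ext j; by_cases h : j ∈ S <;> simp [h]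
    rw [this, hS.2]
  · intro c hc
    simp only [Finset.mem_filter, Finset.mem_univ, true_and] at hc
    rw [Finset.mem_powersetCard]
    exact ⟨hc.2, card_supp c⟩
  · intro S hS
    rw [Finset.mem_powersetCard] at hS
    refine Finset.mem_filter.mpr ⟨Finset.mem_univ _, ?_⟩
    constructor
    · refine (notSat_iff x _).mpr ?_
      intro j a hja
      by_cases h : j ∈ S <;> simp [h] at hja
      exact hja
    · intro j hj
      simp only [supp, Finset.mem_filter, Finset.mem_univ, true_and] at hj
      by_cases h : j ∈ S
      · exact hS.1 h
      · simp [h] at hj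
  · intro c hc
    simp only [Finset.mem_filter, Finset.mem_univ, true_and] at hc
    apply Subtype.ext
    funext j
    by_cases h : j ∈ supp c
    · simp only [h, if_pos]
      simp only [supp, Finset.mem_filter, Finset.mem_univ, true_and] at h
      obtain ⟨a, ha⟩ := Option.isSome_iff_exists.mp h
      rw [ha, (notSat_iff x c).mp hc.1 j a ha]
    · simp only [h, if_neg]
      simp only [supp, Finset.mem_filter, Finset.mem_univ, true_and] at h
      exact (Option.not_isSome_iff_eq_none.mp h).symm
  · intro S hS
    simp only [supp]
    ext j; by_cases h : j ∈ S <;> simp [h]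

lemma card_univ_kclause {n k : ℕ} :
    (Finset.univ : Finset (KClause n k)).card = 2 ^ k * n.choose k := by
  have hfib : ∀ S ∈ Finset.powersetCard k (Finset.univ : Finset (Fin n)),
      ((Finset.univ : Finset (KClause n k)).filter (fun c => supp c = S)).card = 2 ^ k := by
    intro S hS
    rw [Finset.mem_powersetCard_univ] at hS
    have hcard : (2 : ℕ) ^ k = Fintype.card (↥S → Fin 2) := by
      simp [hS]
    rw [hcard, ← Finset.card_univ]
    refine Finset.card_bij' (fun c hc => fun j => (c.1 j.1).get ?_)
      (fun g _ => ⟨fun j => if h : j ∈ S then some (g ⟨j, h⟩) else none, ?_⟩) ?_ ?_ ?_ ?_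
    · simp only [Finset.mem_filter, Finset.mem_univ, true_and] at hc
      have : j.1 ∈ supp c := hc ▸ j.2
      simpa [supp] using this
    · have : (Finset.univ.filter
          (fun j => (if h : j ∈ S then some (g ⟨j, h⟩) else none).isSome)) = S := by
        ext j; by_cases h : j ∈ S <;> simp [h]
      rw [this, hS]
    · intro c hc; exact Finset.mem_univ _
    · intro g hg
      refine Finset.mem_filter.mpr ⟨Finset.mem_univ _, ?_⟩
      ext j; by_cases h : j ∈ S <;> simp [h, supp]
    · intro c hc
      simp only [Finset.mem_filter, Finset.mem_univ, true_and] at hc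
      apply Subtype.ext
      funext j
      by_cases h : j ∈ S
      · simp only [h, dif_pos]
        exact Option.some_get _
      · have : j ∉ supp c := hc ▸ h
        simp only [supp, Finset.mem_filter, Finset.mem_univ, true_and] at this
        simp only [h, dif_neg]
        exact (Option.not_isSome_iff_eq_none.mp this).symm
    · intro g hg
      funext j
      simp [j.2]
  rw [Finset.card_eq_sum_card_fiberwise
    (f := supp) (t := Finset.powersetCard k Finset.univ)
    (fun c _ => by rw [Finset.mem_coe, Finset.mem_powersetCard_univ]; exact card_supp c)]
  rw [Finset.sum_const_nat hfib, Finset.card_powersetCard, Finset.card_univ,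
    Fintype.card_fin, Nat.mul_comm]

/-- The number of `k`-clauses satisfied by `t` but not by `x` is `C(n,k) − C(d,k)`, and the
number satisfied by both is `(2^k − 2)·C(n,k) + C(d,k)`, where `d` is the number of positions
where `x` agrees with `t`. -/
theorem count_clauses_sat_t_not_x_and_both (n k : ℕ) (hk : 1 ≤ k) (hkn : k ≤ n)
    (t x : Fin n → Fin 2) :
    ((Finset.univ : Finset (KClause n k)).filter
        (fun c => ClauseSat t c ∧ ¬ ClauseSat x c)).card
      = n.choose k - (agree x t).choose k ∧
    ((Finset.univ : Finset (KClause n k)).filter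
        (fun c => ClauseSat t c ∧ ClauseSat x c)).card
      = (2 ^ k - 2) * n.choose k + (agree x t).choose k := by
  classical
  set D : Finset (Fin n) := Finset.univ.filter (fun j => x j = t j) with hD
  -- key: ¬sat x ∧ ¬sat t ↔ ¬sat x ∧ supp ⊆ D
  have key : ∀ c : KClause n k,
      (¬ ClauseSat x c ∧ ¬ ClauseSat t c) ↔ (¬ ClauseSat x c ∧ supp c ⊆ D) := by
    intro c
    constructor
    · rintro ⟨hx, ht⟩
      refine ⟨hx, fun j hj => ?_⟩
      simp only [supp, Finset.mem_filter, Finset.mem_univ, true_and] at hj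
      obtain ⟨a, ha⟩ := Option.isSome_iff_exists.mp hj
      simp only [hD, Finset.mem_filter, Finset.mem_univ, true_and]
      rw [(notSat_iff x c).mp hx j a ha, (notSat_iff t c).mp ht j a ha]
    · rintro ⟨hx, hsub⟩
      refine ⟨hx, (notSat_iff t c).mpr fun j a ha => ?_⟩
      have hj : j ∈ supp c := by
        simp [supp, ha]
      have := hsub hj
      simp only [hD, Finset.mem_filter, Finset.mem_univ, true_and] at this
      rw [← this]
      exact (notSat_iff x c).mp hx j a ha
  have hnx : (Finset.univ.filter (fun c : KClause n k => ¬ ClauseSat x c)).card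
      = n.choose k := by
    have := card_notSat_subset (n := n) (k := k) x Finset.univ
    simp only [Finset.subset_univ, and_true, Finset.card_univ, Fintype.card_fin] at this
    exact this
  have hnt : (Finset.univ.filter (fun c : KClause n k => ¬ ClauseSat t c)).card
      = n.choose k := by
    have := card_notSat_subset (n := n) (k := k) t Finset.univ
    simp only [Finset.subset_univ, and_true, Finset.card_univ, Fintype.card_fin] at this
    exact this
  have hboth : (Finset.univ.filter
      (fun c : KClause n k => ¬ ClauseSat x c ∧ ¬ ClauseSat t c)).card
      = (agree x t).choose k := by
    rw [Finset.filter_congr (fun c _ => key c)]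
    exact card_notSat_subset x D
  have hCd_le : (agree x t).choose k ≤ n.choose k :=
    Nat.choose_le_choose k (by
      have : D.card ≤ n := by
        simpa using (Finset.card_le_univ D)
      simpa [agree, hD] using this)
  constructor
  · -- filter (sat t ∧ ¬ sat x) = filter (¬ sat x) \ filter (¬ sat x ∧ ¬ sat t)
    have hset : (Finset.univ : Finset (KClause n k)).filter
        (fun c => ClauseSat t c ∧ ¬ ClauseSat x c)
        = (Finset.univ.filter (fun c : KClause n k => ¬ ClauseSat x c)) \
          (Finset.univ.filter (fun c : KClause n k => ¬ ClauseSat x c ∧ ¬ ClauseSat t c)) := by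
      ext c
      simp only [Finset.mem_filter, Finset.mem_sdiff, Finset.mem_univ, true_and]
      tauto
    rw [hset, Finset.card_sdiff_of_subset (by intro c hc; simp only [Finset.mem_filter] at *; tauto),
      hnx, hboth]
  · have hset : (Finset.univ : Finset (KClause n k)).filter
        (fun c => ClauseSat t c ∧ ClauseSat x c)
        = Finset.univ \
          ((Finset.univ.filter (fun c : KClause n k => ¬ ClauseSat t c)) ∪
           (Finset.univ.filter (fun c : KClause n k => ¬ ClauseSat x c))) := by
      ext c
      simp only [Finset.mem_filter, Finset.mem_sdiff, Finset.mem_union, Finset.mem_univ,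
        true_and]
      tauto
    have hinter : (Finset.univ.filter (fun c : KClause n k => ¬ ClauseSat t c)) ∩
        (Finset.univ.filter (fun c : KClause n k => ¬ ClauseSat x c))
        = Finset.univ.filter (fun c : KClause n k => ¬ ClauseSat x c ∧ ¬ ClauseSat t c) := by
      ext c; simp only [Finset.mem_inter, Finset.mem_filter, Finset.mem_univ, true_and]; tauto
    have hiu := Finset.card_union_add_card_inter
      (Finset.univ.filter (fun c : KClause n k => ¬ ClauseSat t c))
      (Finset.univ.filter (fun c : KClause n k => ¬ ClauseSat x c))
    rw [hinter, hnt, hnx, hboth] at hiu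
    rw [hset, Finset.card_sdiff_of_subset (Finset.subset_univ _), card_univ_kclause]
    have hle2 : 2 ≤ 2 ^ k := by
      calc 2 = 2 ^ 1 := by norm_num
      _ ≤ 2 ^ k := Nat.pow_le_pow_right (by norm_num) hk
    have hmul : (2 ^ k - 2) * n.choose k = 2 ^ k * n.choose k - 2 * n.choose k := by
      rw [Nat.sub_mul]
    have hmul2 : 2 * n.choose k ≤ 2 ^ k * n.choose k :=
      Nat.mul_le_mul_right _ hle2
    have hunion_le : ((Finset.univ.filter (fun c : KClause n k => ¬ ClauseSat t c)) ∪
        (Finset.univ.filter (fun c : KClause n k => ¬ ClauseSat x c))).card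
        ≤ 2 ^ k * n.choose k := by
      calc _ ≤ (Finset.univ : Finset (KClause n k)).card := Finset.card_le_univ _
      _ = _ := card_univ_kclause
    omega
end

section
/- For all integers 2 ≤ k ≤ n, the k-local search Hamiltonian with target 0^{n+1} on n+1 qubits decomposes exactly as H_{n+1,k,0} = ((n+1−k)/(n+1))·(I₂ ⊗ H_{n,k,0}) + (k/(n+1))·(σ_{z+} ⊗ H_{n,k−1,0}), where the first Kronecker factor corresponds to the added qubit, I₂ is the 2×2 identity, and σ_{z+} = [[1,0],[0,0]]. -/
open Matrix Finset Kronecker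

/-- Number of positions where `x` is `0` (agreement with the target `0^n`). -/
def agreeZero {n : ℕ} (x : Fin n → Fin 2) : ℕ :=
  (Finset.univ.filter (fun j => x j = 0)).card

/-- The `k`-local search Hamiltonian with target `0^n` on `n` qubits. -/
noncomputable def Hsearch0 (n k : ℕ) :
    Matrix (Fin n → Fin 2) (Fin n → Fin 2) ℂ :=
  Matrix.diagonal (fun x => ((agreeZero x).choose k : ℂ) / (n.choose k : ℂ))

/-- The `k`-local search Hamiltonian with target `0^{n+1}` on `n+1` qubits, with the basis
state written `(x₀, x')` where `x₀` is the added qubit. -/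
noncomputable def Hsearch0' (n k : ℕ) :
    Matrix (Fin 2 × (Fin n → Fin 2)) (Fin 2 × (Fin n → Fin 2)) ℂ :=
  Matrix.diagonal (fun p =>
    (((if p.1 = 0 then 1 else 0) + agreeZero p.2).choose k : ℂ) / ((n + 1).choose k : ℂ))

lemma castA (n k : ℕ) (hkn : k ≤ n) :
    (n.choose k : ℂ) * ((n:ℂ)+1) = ((n+1).choose k : ℂ) * ((n:ℂ)+1-(k:ℂ)) := by
  have h := Nat.choose_mul_succ_eq n k
  have h2 : ((n:ℂ)+1-(k:ℂ)) = ((n+1-k : ℕ) : ℂ) := by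
    push_cast [Nat.cast_sub (by omega : k ≤ n+1)]; ring
  rw [h2]
  exact_mod_cast congrArg (Nat.cast : ℕ → ℂ) h

lemma castB (n m : ℕ) :
    ((n+1).choose (m+1) : ℂ) * ((m:ℂ)+1) = ((n:ℂ)+1) * (n.choose m : ℂ) := by
  have h := Nat.add_one_mul_choose_eq n m
  exact_mod_cast (congrArg (Nat.cast : ℕ → ℂ) h).symm

lemma key1 (d n k : ℕ) (hkn : k ≤ n) :
    (d.choose k : ℂ) / ((n+1).choose k : ℂ)
      = (((n:ℂ)+1-(k:ℂ)) / ((n:ℂ)+1)) * ((d.choose k : ℂ) / (n.choose k : ℂ)) := by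
  have ha : (n.choose k : ℂ) ≠ 0 := by exact_mod_cast (Nat.choose_pos hkn).ne'
  have hA : ((n+1).choose k : ℂ) ≠ 0 := by
    exact_mod_cast (Nat.choose_pos (by omega : k ≤ n+1)).ne'
  have hn : ((n:ℂ)+1) ≠ 0 := Nat.cast_add_one_ne_zero n
  field_simp
  linear_combination (d.choose k : ℂ) * castA n k hkn

lemma key0 (d n k : ℕ) (hk : 1 ≤ k) (hkn : k ≤ n) :
    ((d+1).choose k : ℂ) / ((n+1).choose k : ℂ)
      = (((n:ℂ)+1-(k:ℂ)) / ((n:ℂ)+1)) * ((d.choose k : ℂ) / (n.choose k : ℂ))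
        + ((k:ℂ) / ((n:ℂ)+1)) * ((d.choose (k-1) : ℂ) / (n.choose (k-1) : ℂ)) := by
  obtain ⟨m, rfl⟩ : ∃ m, k = m + 1 := ⟨k - 1, by omega⟩
  simp only [Nat.add_sub_cancel]
  have ha : (n.choose (m+1) : ℂ) ≠ 0 := by exact_mod_cast (Nat.choose_pos hkn).ne'
  have hb : (n.choose m : ℂ) ≠ 0 := by
    exact_mod_cast (Nat.choose_pos (by omega : m ≤ n)).ne'
  have hA : ((n+1).choose (m+1) : ℂ) ≠ 0 := by
    exact_mod_cast (Nat.choose_pos (by omega : m+1 ≤ n+1)).ne'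
  have hn : ((n:ℂ)+1) ≠ 0 := Nat.cast_add_one_ne_zero n
  have hp : ((d+1).choose (m+1) : ℂ) = (d.choose (m+1) : ℂ) + (d.choose m : ℂ) := by
    rw [Nat.choose_succ_succ]; push_cast; ring
  rw [hp, add_div, ← key1 d n (m+1) hkn]
  congr 1
  field_simp
  push_cast
  linear_combination (-(d.choose m : ℂ)) * castB n m

/-- Exact decomposition of the `k`-local search Hamiltonian on `n+1` qubits:
`H_{n+1,k,0} = ((n+1−k)/(n+1))·(I₂ ⊗ H_{n,k,0}) + (k/(n+1))·(σ_{z+} ⊗ H_{n,k−1,0})`. -/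
theorem Hsearch_succ_decomposition (n k : ℕ) (hk : 2 ≤ k) (hkn : k ≤ n) :
    Hsearch0' n k
      = ((((n : ℂ) + 1 - (k : ℂ)) / ((n : ℂ) + 1)) •
          ((1 : Matrix (Fin 2) (Fin 2) ℂ) ⊗ₖ Hsearch0 n k)) +
        (((k : ℂ) / ((n : ℂ) + 1)) • (sigmaZP ⊗ₖ Hsearch0 n (k - 1))) := by
  ext ⟨b, x⟩ ⟨c, y⟩
  simp only [Hsearch0', Hsearch0, sigmaZP, Matrix.add_apply, Matrix.smul_apply,
    Matrix.kroneckerMap_apply, Matrix.diagonal_apply, Matrix.one_apply, Prod.mk.injEq,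
    smul_eq_mul]
  by_cases hxy : x = y
  · subst hxy
    fin_cases b <;> fin_cases c <;>
      simp only [if_true, if_false, and_true, and_false, true_and, Fin.mk_one,
        Fin.zero_eta, Fin.isValue, Matrix.cons_val', Matrix.cons_val_zero, Matrix.cons_val_one,
        Matrix.head_cons, Matrix.empty_val', Matrix.cons_val_fin_one, Matrix.head_fin_const] <;>
      norm_num
    · rw [Nat.add_comm 1]; exact key0 (agreeZero x) n k (by omega) hkn
    · exact key1 (agreeZero x) n k hkn
  · simp [hxy]
end
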